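/- Let n ≥ 2, m ≥ 2 an integer, and let Ω ⊆ ℝⁿ be open. Let à : ℝⁿ → ℂⁿ be C¹ and let q̃ : Ω → ℂ be measurable and essentially bounded. Suppose that for every ζ ∈ ℂⁿ with ζ·ζ = 0, writing v_ζ(x) := exp(ζ·x), one has −(D·Ã)(x) v_ζ(x) − (m+1) Ã(x)·(Dv_ζ)(x) + q̃(x) v_ζ(x) = 0 for Lebesgue-almost every x ∈ Ω. Then Ã(x) = 0 for every x ∈ Ω and q̃(x) = 0 for Lebesgue-almost every x ∈ Ω. -/

import Mathlib

open MeasureTheory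
open scoped BigOperators

/-- Let `n ≥ 2`, `m ≥ 2`, `Ω ⊆ ℝⁿ` open.  Let `Ã : ℝⁿ → ℂⁿ` be
`C¹` and `q̃ : Ω → ℂ` measurable and essentially bounded.  Suppose that for
every null vector `ζ ∈ ℂⁿ` (`ζ·ζ = 0`), with `v_ζ(x) = exp(ζ·x)` (so that
`Dv_ζ = −iζ v_ζ` where `D = −i∇`), one has
`−(D·Ã)(x) v_ζ(x) − (m+1) Ã(x)·(Dv_ζ)(x) + q̃(x) v_ζ(x) = 0` for a.e. `x ∈ Ω`.
Then `Ã = 0` everywhere on `Ω` and `q̃ = 0` a.e. in `Ω`. -/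
theorem transport_identity_forces_vanishing (n m : ℕ) (hn : 2 ≤ n) (hm : 2 ≤ m)
    (Ω : Set (Fin n → ℝ)) (hΩ : IsOpen Ω)
    (Atil : (Fin n → ℝ) → (Fin n → ℂ)) (hAtil : ContDiff ℝ 1 Atil)
    (qtil : (Fin n → ℝ) → ℂ) (hqmeas : Measurable qtil)
    (hqbdd : MemLp qtil ⊤ (volume.restrict Ω))
    (hid : ∀ ζ : Fin n → ℂ, (∑ j, ζ j * ζ j) = 0 →
      ∀ᵐ x ∂(volume.restrict Ω),
        -((-Complex.I) * (∑ j, fderiv ℝ (fun y => Atil y j) x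
              (Pi.single j (1 : ℝ))))
            * Complex.exp (∑ j, ζ j * (x j : ℂ))
          - ((m : ℂ) + 1) * (∑ j, Atil x j *
              ((-Complex.I) * ζ j * Complex.exp (∑ i, ζ i * (x i : ℂ))))
          + qtil x * Complex.exp (∑ j, ζ j * (x j : ℂ)) = 0) :
    (∀ x ∈ Ω, Atil x = 0) ∧ (∀ᵐ x ∂(volume.restrict Ω), qtil x = 0) := by
  classical
  set S : (Fin n → ℝ) → ℂ := fun x =>
    ∑ j, fderiv ℝ (fun y => Atil y j) x (Pi.single j (1 : ℝ)) with hSdef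
  let i0 : Fin n := ⟨0, by omega⟩
  -- zero frequency identity
  have h0 := hid (fun _ => 0) (by simp)
  simp only [mul_zero, zero_mul, neg_zero, Finset.sum_const_zero,
    Complex.exp_zero, mul_one, mul_zero, sub_zero] at h0
  -- h0 : a.e. -(-I * S x) + q x = 0
  have hm1 : ((m : ℂ) + 1) ≠ 0 := by
    exact_mod_cast Nat.cast_add_one_ne_zero (R := ℂ) m
  -- key lemma: for any b ≠ i0 and s² = -1, a.e. A_{i0} + s A_b = 0
  have key : ∀ (b : Fin n), b ≠ i0 → ∀ (s : ℂ), s * s = -1 →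
      ∀ᵐ x ∂(volume.restrict Ω), Atil x i0 + s * Atil x b = 0 := by
    intro b hb s hs
    set ζ : Fin n → ℂ := fun j => if j = i0 then 1 else if j = b then s else 0 with hζ
    have hnull : (∑ j, ζ j * ζ j) = 0 := by
      have hterm : ∀ j ∈ Finset.univ, ζ j * ζ j =
          (if j = i0 then (1 : ℂ) else 0) + (if j = b then s * s else 0) := by
        intro j _
        by_cases h1 : j = i0
        · simp [hζ, h1, Ne.symm hb]
        · by_cases h2 : j = b <;> simp [hζ, h1, h2, hb]
      rw [Finset.sum_congr rfl hterm, Finset.sum_add_distrib,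
        Finset.sum_ite_eq' Finset.univ i0, Finset.sum_ite_eq' Finset.univ b]
      simp [hs]
    have h1 := hid ζ hnull
    filter_upwards [h1, h0] with x hx1 hx0
    set E := Complex.exp (∑ i, ζ i * (x i : ℂ)) with hE
    have hEne : E ≠ 0 := Complex.exp_ne_zero _
    have hsum : (∑ j, Atil x j * ((-Complex.I) * ζ j * E))
        = (Atil x i0 + s * Atil x b) * ((-Complex.I) * E) := by
      have hterm : ∀ j ∈ Finset.univ, Atil x j * ((-Complex.I) * ζ j * E) =
          (if j = i0 then Atil x i0 * ((-Complex.I) * E) else 0) +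
          (if j = b then (s * Atil x b) * ((-Complex.I) * E) else 0) := by
        intro j _
        by_cases h1 : j = i0
        · simp only [hζ, h1]
          simp [Ne.symm hb]
          try ring
        · by_cases h2 : j = b
          · simp only [hζ, h1, h2]
            simp [h1, hb]
            try ring
          · simp [hζ, h1, h2]
      rw [Finset.sum_congr rfl hterm, Finset.sum_add_distrib,
        Finset.sum_ite_eq' Finset.univ i0, Finset.sum_ite_eq' Finset.univ b]
      simp
      ring
    rw [hsum] at hx1
    have hcanc : ((m : ℂ) + 1) * ((Atil x i0 + s * Atil x b) * ((-Complex.I) * E)) = 0 := by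
      linear_combination E * hx0 - hx1
    have hIne : (-Complex.I) * E ≠ 0 := mul_ne_zero (neg_ne_zero.2 Complex.I_ne_zero) hEne
    rcases mul_eq_zero.1 hcanc with h | h
    · exact absurd h hm1
    · rcases mul_eq_zero.1 h with h | h
      · exact h
      · exact absurd h hIne
  -- a.e. vanishing of Atil
  have hb1 : ∃ b : Fin n, b ≠ i0 := ⟨⟨1, by omega⟩, by simp [i0, Fin.ext_iff]⟩
  have hAae : ∀ᵐ x ∂(volume.restrict Ω), Atil x = 0 := by
    have hall : ∀ᵐ x ∂(volume.restrict Ω), ∀ b : Fin n,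
        (b ≠ i0 → (Atil x i0 + Complex.I * Atil x b = 0 ∧
          Atil x i0 + (-Complex.I) * Atil x b = 0)) := by
      rw [MeasureTheory.ae_all_iff]
      intro b
      by_cases hb : b = i0
      · exact Filter.Eventually.of_forall fun x h => absurd hb h
      · filter_upwards [key b hb Complex.I (by simp [Complex.I_mul_I]),
          key b hb (-Complex.I) (by simp [Complex.I_mul_I])] with x hx1 hx2
        exact fun _ => ⟨hx1, hx2⟩
    filter_upwards [hall] with x hx
    funext j
    by_cases hj : j = i0
    · obtain ⟨b, hb⟩ := hb1
      obtain ⟨e1, e2⟩ := hx b hb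
      rw [hj]
      have h2 : (2 : ℂ) * Atil x i0 = 0 := by linear_combination e1 + e2
      simpa using (mul_eq_zero.1 h2).resolve_left two_ne_zero
    · obtain ⟨e1, e2⟩ := hx j hj
      have h2 : (2 : ℂ) * Complex.I * Atil x j = 0 := by linear_combination e1 - e2
      have h2' : (2 : ℂ) * Complex.I ≠ 0 := by simp [Complex.I_ne_zero]
      simpa using (mul_eq_zero.1 h2).resolve_left h2'
  -- from a.e. to everywhere on Ω, by continuity
  have hcont : Continuous Atil := hAtil.continuous
  have hAΩ : ∀ x ∈ Ω, Atil x = 0 := by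
    have hmeas0 : (volume.restrict Ω) {x | Atil x ≠ 0} = 0 := by
      simpa [ae_iff] using hAae
    have hU : IsOpen ({x | Atil x ≠ 0} ∩ Ω) :=
      (isOpen_compl_singleton.preimage hcont).inter hΩ
    have hvol : volume ({x | Atil x ≠ 0} ∩ Ω) = 0 := by
      rw [← Measure.restrict_apply₀' (hΩ.measurableSet.nullMeasurableSet)]
      exact hmeas0
    have hempty : ({x | Atil x ≠ 0} ∩ Ω) = ∅ :=
      (hU.measure_eq_zero_iff volume).1 hvol
    intro x hx
    by_contra hne
    exact absurd hempty (Set.Nonempty.ne_empty ⟨x, hne, hx⟩)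
  refine ⟨hAΩ, ?_⟩
  -- divergence vanishes on Ω
  have hS0 : ∀ x ∈ Ω, S x = 0 := by
    intro x hx
    have hd : ∀ j : Fin n, fderiv ℝ (fun y => Atil y j) x = 0 := by
      intro j
      have hloc : (fun y => Atil y j) =ᶠ[nhds x] (fun _ => (0 : ℂ)) := by
        filter_upwards [hΩ.mem_nhds hx] with y hy
        simp [hAΩ y hy]
      rw [hloc.fderiv_eq]
      exact fderiv_const_apply 0
    simp [hSdef, hd]
  filter_upwards [h0, ae_restrict_mem hΩ.measurableSet] with x hx0 hxΩ
  have hx := hS0 x hxΩ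
  simp only [hSdef] at hx
  rw [hx] at hx0
  simpa using hx0
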